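/- arXiv:1405.5333 — 3 statements merged into one kernel-verified Lean document; each statement's English description precedes it below -/
import Mathlib

section
/- For θ > 0 and μ ∈ ℝ, the function u(x) = e^{x(√(μ²+2θ)−μ)}·(θ·e^{−2(x−a)√(μ²+2θ)} + μ² + θ + μ√(μ²+2θ)) satisfies μ·u′(x) + (1/2)·u″(x) = θ·u(x) for all x, and u′(a) = 0. -/
open Real

lemma exp_lin_deriv (c k x : ℝ) :
    HasDerivAt (fun x => c * Real.exp (x * k)) (c * k * Real.exp (x * k)) x := by
  have h := (((hasDerivAt_id x).mul_const k).exp).const_mul c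
  refine h.congr_deriv ?_
  simp only [id_eq]
  ring

lemma sum_exp_deriv (c₁ k₁ c₂ k₂ : ℝ) :
    deriv (fun x => c₁ * Real.exp (x * k₁) + c₂ * Real.exp (x * k₂)) =
      fun x => c₁ * k₁ * Real.exp (x * k₁) + c₂ * k₂ * Real.exp (x * k₂) := by
  funext x
  exact (((exp_lin_deriv c₁ k₁ x).add (exp_lin_deriv c₂ k₂ x))).deriv

theorem drifted_laplace_ode (a μ θ : ℝ) (hθ : 0 < θ)
    (u : ℝ → ℝ)
    (hu : u = fun x => Real.exp (x * (Real.sqrt (μ ^ 2 + 2 * θ) - μ)) *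
      (θ * Real.exp (-2 * (x - a) * Real.sqrt (μ ^ 2 + 2 * θ)) + μ ^ 2 + θ + μ * Real.sqrt (μ ^ 2 + 2 * θ))) :
    (∀ x : ℝ, μ * deriv u x + (1 / 2) * deriv (deriv u) x = θ * u x) ∧ deriv u a = 0 := by
  set g := Real.sqrt (μ ^ 2 + 2 * θ) with hg
  have hg2 : g ^ 2 = μ ^ 2 + 2 * θ := Real.sq_sqrt (by positivity)
  set c₁ : ℝ := θ * Real.exp (2 * a * g) with hc₁
  set c₂ : ℝ := μ ^ 2 + θ + μ * g with hc₂
  have hu' : u = fun x => c₁ * Real.exp (x * (-g - μ)) + c₂ * Real.exp (x * (g - μ)) := by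
    funext x
    rw [hu]
    simp only
    have key : Real.exp (x * (g - μ)) * Real.exp (-2 * (x - a) * g)
        = Real.exp (2 * a * g) * Real.exp (x * (-g - μ)) := by
      rw [← Real.exp_add, ← Real.exp_add]; congr 1; ring
    simp only [hc₁, hc₂]
    linear_combination θ * key
  have hd1 : deriv u = fun x => c₁ * (-g - μ) * Real.exp (x * (-g - μ))
      + c₂ * (g - μ) * Real.exp (x * (g - μ)) := by
    rw [hu']; exact sum_exp_deriv c₁ (-g - μ) c₂ (g - μ)
  have hd2 : deriv (deriv u) = fun x => c₁ * (-g - μ) * (-g - μ) * Real.exp (x * (-g - μ))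
      + c₂ * (g - μ) * (g - μ) * Real.exp (x * (g - μ)) := by
    rw [hd1]
    have := sum_exp_deriv (c₁ * (-g - μ)) (-g - μ) (c₂ * (g - μ)) (g - μ)
    rw [this]
  constructor
  · intro x
    rw [hd2, hd1, hu']
    simp only
    have e1 : μ * (c₁ * (-g - μ)) + (1/2) * (c₁ * (-g - μ) * (-g - μ)) = θ * c₁ := by
      linear_combination (c₁ / 2) * hg2
    have e2 : μ * (c₂ * (g - μ)) + (1/2) * (c₂ * (g - μ) * (g - μ)) = θ * c₂ := by
      linear_combination (c₂ / 2) * hg2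
    linear_combination Real.exp (x * (-g - μ)) * e1 + Real.exp (x * (g - μ)) * e2
  · rw [hd1]
    simp only
    have h1 : c₁ * Real.exp (a * (-g - μ)) = θ * Real.exp (a * (g - μ)) := by
      rw [hc₁, mul_assoc, ← Real.exp_add]; congr 2; ring
    have h2 : c₂ * (g - μ) = θ * (g + μ) := by
      simp only [hc₂]; linear_combination μ * hg2
    linear_combination (-g - μ) * h1 + Real.exp (a * (g - μ)) * h2
end

section
/- Let a < S and let g be an integrable density on [a,S] symmetric about (a+S)/2, with bilateral Laplace transform ĝ(θ) = ∫_a^S e^{−θx}g(x)dx. If f̂(θ) = (ĝ(√(2θ)) + ĝ(−√(2θ))·e^{−2a√(2θ)})/(e^{−S√(2θ)} + e^{(S−2a)√(2θ)}) for θ ≥ 0, then ĝ(θ) = ((e^{−Sθ} + e^{−(2a−S)θ})/(1 + e^{(S−a)θ}))·f̂(θ²/2) for all θ ≥ 0. -/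
open Real MeasureTheory intervalIntegral

theorem ifpt_symmetric_inversion (a S : ℝ) (ha : a < S) (g : ℝ → ℝ) (fhat : ℝ → ℝ)
    (hmeas : Measurable g) (hint : Integrable g)
    (hnn : ∀ x, 0 ≤ g x)
    (hsupp : ∀ x, x ∉ Set.Icc a S → g x = 0)
    (hsymm : ∀ x, g (a + S - x) = g x)
    (ghat : ℝ → ℝ) (hghat : ghat = fun θ => ∫ x in a..S, Real.exp (-θ * x) * g x)
    (hf : ∀ θ : ℝ, 0 ≤ θ →
      fhat θ = (ghat (Real.sqrt (2 * θ)) + ghat (-Real.sqrt (2 * θ)) * Real.exp (-2 * a * Real.sqrt (2 * θ))) /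
        (Real.exp (-S * Real.sqrt (2 * θ)) + Real.exp ((S - 2 * a) * Real.sqrt (2 * θ)))) :
    ∀ θ : ℝ, 0 ≤ θ →
      ghat θ = ((Real.exp (-S * θ) + Real.exp (-(2 * a - S) * θ)) / (1 + Real.exp ((S - a) * θ))) *
        fhat (θ ^ 2 / 2) := by
  intro θ hθ
  have hsq : Real.sqrt (2 * (θ ^ 2 / 2)) = θ := by
    rw [show 2 * (θ ^ 2 / 2) = θ ^ 2 by ring, Real.sqrt_sq hθ]
  have hghatneg : ghat (-θ) = Real.exp ((a + S) * θ) * ghat θ := by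
    rw [hghat]
    simp only
    have h1 : (∫ x in a..S, Real.exp (-(-θ) * x) * g x)
        = ∫ x in a..S, Real.exp (-(-θ) * (a + S - x)) * g (a + S - x) := by
      rw [intervalIntegral.integral_comp_sub_left
        (fun x => Real.exp (-(-θ) * x) * g x) (a + S)]
      norm_num
    rw [h1, ← intervalIntegral.integral_const_mul]
    apply intervalIntegral.integral_congr
    intro x hx
    simp only
    rw [hsymm x, ← mul_assoc, ← Real.exp_add]
    congr 1
    ring
  have hexp : Real.exp ((a + S) * θ) * Real.exp (-2 * a * θ) = Real.exp ((S - a) * θ) := by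
    rw [← Real.exp_add]; congr 1; ring
  have hd1 : Real.exp (-S * θ) + Real.exp ((S - 2 * a) * θ) ≠ 0 := by positivity
  have hd2 : (1 : ℝ) + Real.exp ((S - a) * θ) ≠ 0 := by positivity
  rw [hf (θ ^ 2 / 2) (by positivity), hsq, hghatneg,
    show -(2 * a - S) * θ = (S - 2 * a) * θ by ring]
  have hn : ghat θ + Real.exp ((a + S) * θ) * ghat θ * Real.exp (-2 * a * θ)
      = ghat θ * (1 + Real.exp ((S - a) * θ)) := by
    rw [← hexp]; ring
  rw [hn]
  field_simp
end

section
/- For a < S and θ > 0, the Laplace transform of the uniform density on (a,S), ĝ(θ) = (e^{−aθ} − e^{−Sθ})/((S−a)θ), satisfies (ĝ(√(2θ)) + ĝ(−√(2θ))·e^{−2a√(2θ)})/(e^{−S√(2θ)} + e^{(S−2a)√(2θ)}) = tanh((S−a)√(2θ))/((S−a)√(2θ)). -/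
open Real

theorem uniform_density_ifpt (a S θ : ℝ) (ha : a < S) (hθ : 0 < θ)
    (ghat : ℝ → ℝ)
    (hghat : ghat = fun u => (Real.exp (-a * u) - Real.exp (-S * u)) / ((S - a) * u)) :
    (ghat (Real.sqrt (2 * θ)) + ghat (-Real.sqrt (2 * θ)) * Real.exp (-2 * a * Real.sqrt (2 * θ))) /
      (Real.exp (-S * Real.sqrt (2 * θ)) + Real.exp ((S - 2 * a) * Real.sqrt (2 * θ))) =
    Real.tanh ((S - a) * Real.sqrt (2 * θ)) / ((S - a) * Real.sqrt (2 * θ)) := by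
  subst hghat
  simp only
  set s := Real.sqrt (2 * θ) with hsdef
  have hspos : 0 < s := Real.sqrt_pos.2 (by linarith)
  have hsa : (S - a) ≠ 0 := by linarith
  have hs0 : s ≠ 0 := ne_of_gt hspos
  have hp : Real.exp (a * s) ≠ 0 := Real.exp_ne_zero _
  have hq : Real.exp (S * s) ≠ 0 := Real.exp_ne_zero _
  have e1 : Real.exp (-a * s) = (Real.exp (a * s))⁻¹ := by
    rw [← Real.exp_neg]; ring_nf
  have e2 : Real.exp (-S * s) = (Real.exp (S * s))⁻¹ := by
    rw [← Real.exp_neg]; ring_nf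
  have e3 : Real.exp (-a * -s) = Real.exp (a * s) := by ring_nf
  have e4 : Real.exp (-S * -s) = Real.exp (S * s) := by ring_nf
  have e5 : Real.exp (-2 * a * s) = ((Real.exp (a * s))⁻¹) ^ 2 := by
    rw [← Real.exp_neg, ← Real.exp_nat_mul]; ring_nf
  have e6 : Real.exp ((S - 2 * a) * s) = Real.exp (S * s) * ((Real.exp (a * s))⁻¹) ^ 2 := by
    rw [← Real.exp_neg, ← Real.exp_nat_mul, ← Real.exp_add]; ring_nf
  have hcosh : Real.cosh ((S - a) * s) ≠ 0 := ne_of_gt (Real.cosh_pos _)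
  have hden : Real.exp (S * s) * ((Real.exp (a * s))⁻¹) ^ 2 + (Real.exp (S * s))⁻¹ ≠ 0 := by
    positivity
  rw [Real.tanh_eq_sinh_div_cosh, Real.sinh_eq, Real.cosh_eq, e1, e2, e3, e4, e5, e6]
  have e7 : Real.exp ((S - a) * s) = Real.exp (S * s) * (Real.exp (a * s))⁻¹ := by
    rw [← Real.exp_neg, ← Real.exp_add]; ring_nf
  have e8 : Real.exp (-((S - a) * s)) = (Real.exp (S * s))⁻¹ * Real.exp (a * s) := by
    rw [← Real.exp_neg, ← Real.exp_add]; ring_nf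
  rw [e7, e8]
  field_simp
  ring
end
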